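/- For any two distinct elements x, y of a free quandle FQ(S), there exists a natural number n and a quandle homomorphism φ : FQ(S) → Conj(Sym(n)) into the conjugation quandle of the symmetric group on n letters such that φ(x) ≠ φ(y). -/

import Mathlib

open Quandles

/-- The free rack on a set `S`: pairs `(a, w)` (thought of as the conjugate
`w a w⁻¹` of the generator `a`), following Fenn–Rourke. -/
def FreeRack (S : Type u) : Type u := S × FreeGroup S

namespace FreeRack

variable {S : Type u}

/-- The element of the free group represented by the pair `(a, w)`,
namely the conjugate `w a w⁻¹` of the generator `a`. -/
def toGroup (x : FreeRack S) : FreeGroup S := x.2 * FreeGroup.of x.1 * x.2⁻¹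

instance : Rack (FreeRack S) where
  act x y := (y.1, toGroup x * y.2)
  self_distrib := by
    rintro ⟨a, w⟩ ⟨b, u⟩ ⟨c, v⟩
    refine Prod.ext rfl ?_
    show toGroup (a, w) * (toGroup (b, u) * v)
        = toGroup (b, toGroup (a, w) * u) * (toGroup (a, w) * v)
    simp only [toGroup]
    group
  invAct x y := (y.1, (toGroup x)⁻¹ * y.2)
  left_inv x y := by
    refine Prod.ext rfl ?_
    show (toGroup x)⁻¹ * (toGroup x * y.2) = y.2
    group
  right_inv x y := by
    refine Prod.ext rfl ?_
    show toGroup x * ((toGroup x)⁻¹ * y.2) = y.2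
    group

/-- The defining relation of the free quandle as a quotient of the free rack:
`(a, w) ~ (a, w · a)`. -/
def rel (p q : FreeRack S) : Prop := q = (p.1, p.2 * FreeGroup.of p.1)

theorem toGroup_of_rel {p q : FreeRack S} (h : rel p q) : toGroup p = toGroup q := by
  subst h
  rcases p with ⟨a, w⟩
  simp only [toGroup]
  group

theorem toGroup_of_eqvGen {p q : FreeRack S} (h : Relation.EqvGen rel p q) :
    toGroup p = toGroup q := by
  induction h with
  | rel a b hab => exact toGroup_of_rel hab
  | refl a => rfl
  | symm a b _ ih => exact ih.symm
  | trans a b c _ _ ih1 ih2 => exact ih1.trans ih2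

theorem fst_of_eqvGen {p q : FreeRack S} (h : Relation.EqvGen rel p q) : p.1 = q.1 := by
  induction h with
  | rel a b hab => rw [hab]
  | refl a => rfl
  | symm a b _ ih => exact ih.symm
  | trans a b c _ _ ih1 ih2 => exact ih1.trans ih2

/-- The setoid generated by the relation `(a, w) ~ (a, w · a)`. -/
instance setoid (S : Type u) : Setoid (FreeRack S) :=
  ⟨Relation.EqvGen rel, Relation.EqvGen.is_equivalence rel⟩

theorem act_eqvGen_right (p : FreeRack S) {q q' : FreeRack S}
    (h : Relation.EqvGen rel q q') : Relation.EqvGen rel (p ◃ q) (p ◃ q') := by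
  induction h with
  | rel a b hab =>
      refine Relation.EqvGen.rel _ _ ?_
      rw [hab]
      refine Prod.ext rfl ?_
      show toGroup p * (a.2 * FreeGroup.of a.1) = toGroup p * a.2 * FreeGroup.of a.1
      group
  | refl a => exact Relation.EqvGen.refl _
  | symm a b _ ih => exact Relation.EqvGen.symm _ _ ih
  | trans a b c _ _ ih1 ih2 => exact Relation.EqvGen.trans _ _ _ ih1 ih2

theorem act_eq_of_eqvGen_left {p p' : FreeRack S} (q : FreeRack S)
    (h : Relation.EqvGen rel p p') : p ◃ q = p' ◃ q := by
  show (q.1, toGroup p * q.2) = (q.1, toGroup p' * q.2)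
  rw [toGroup_of_eqvGen h]

theorem invAct_eqvGen_right (p : FreeRack S) {q q' : FreeRack S}
    (h : Relation.EqvGen rel q q') : Relation.EqvGen rel (p ◃⁻¹ q) (p ◃⁻¹ q') := by
  induction h with
  | rel a b hab =>
      refine Relation.EqvGen.rel _ _ ?_
      rw [hab]
      refine Prod.ext rfl ?_
      show (toGroup p)⁻¹ * (a.2 * FreeGroup.of a.1) = (toGroup p)⁻¹ * a.2 * FreeGroup.of a.1
      group
  | refl a => exact Relation.EqvGen.refl _
  | symm a b _ ih => exact Relation.EqvGen.symm _ _ ih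
  | trans a b c _ _ ih1 ih2 => exact Relation.EqvGen.trans _ _ _ ih1 ih2

theorem invAct_eq_of_eqvGen_left {p p' : FreeRack S} (q : FreeRack S)
    (h : Relation.EqvGen rel p p') : p ◃⁻¹ q = p' ◃⁻¹ q := by
  show (q.1, (toGroup p)⁻¹ * q.2) = (q.1, (toGroup p')⁻¹ * q.2)
  rw [toGroup_of_eqvGen h]

end FreeRack

/-- The free quandle on a set `S`: the quotient of the free rack on `S` by the
equivalence relation generated by `(a, w) ~ (a, w · a)`. -/
def FreeQuandle (S : Type u) : Type u := Quotient (FreeRack.setoid S)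

namespace FreeQuandle

variable {S : Type u}

instance : Quandle (FreeQuandle S) where
  act := Quotient.map₂ Shelf.act (by
    intro p p' hp q q' hq
    calc Shelf.act p q = Shelf.act p' q := FreeRack.act_eq_of_eqvGen_left q hp
    _ ≈ Shelf.act p' q' := FreeRack.act_eqvGen_right p' hq)
  self_distrib := by
    intro x y z
    refine Quotient.inductionOn₃ x y z (fun p q r => ?_)
    exact congrArg (Quotient.mk _) Shelf.self_distrib
  invAct := Quotient.map₂ Rack.invAct (by
    intro p p' hp q q' hq
    calc Rack.invAct p q = Rack.invAct p' q := FreeRack.invAct_eq_of_eqvGen_left q hp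
    _ ≈ Rack.invAct p' q' := FreeRack.invAct_eqvGen_right p' hq)
  left_inv := by
    intro x y
    refine Quotient.inductionOn₂ x y (fun p q => ?_)
    exact congrArg (Quotient.mk _) (Rack.left_inv p q)
  right_inv := by
    intro x y
    refine Quotient.inductionOn₂ x y (fun p q => ?_)
    exact congrArg (Quotient.mk _) (Rack.right_inv p q)
  fix := by
    intro x
    refine Quotient.inductionOn x (fun p => ?_)
    refine Quotient.sound ?_
    refine Relation.EqvGen.trans _ _ _ (Relation.EqvGen.refl _) ?_
    have h : p ◃ p = (p.1, p.2 * FreeGroup.of p.1) := by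
      refine Prod.ext rfl ?_
      show FreeRack.toGroup p * p.2 = p.2 * FreeGroup.of p.1
      simp only [FreeRack.toGroup]
      group
    rw [h]
    exact Relation.EqvGen.symm _ _ (Relation.EqvGen.rel _ _ rfl)

/-- The canonical inclusion of the generating set into the free quandle. -/
def of (a : S) : FreeQuandle S := Quotient.mk _ (a, 1)

/-- The natural map from the free quandle on `S` into the conjugation quandle
of the free group on `S`, sending the class of `(a, w)` to the conjugate
`w a w⁻¹` of the generator `a`. -/
def toConj : FreeQuandle S → Quandle.Conj (FreeGroup S) :=
  Quotient.lift FreeRack.toGroup (fun _ _ h => FreeRack.toGroup_of_eqvGen h)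

end FreeQuandle

set_option linter.unusedTactic false
set_option linter.unreachableTactic false
set_option linter.unusedSectionVars false

namespace FreeQuandleAux
open FreeGroup

variable {α : Type*} [DecidableEq α]

theorem reduce_cons_of_reduced {L : List (α × Bool)} (h : reduce L = L) (x : α × Bool) :
    reduce (x :: L) = x :: L ∨ ∃ L', L = (x.1, !x.2) :: L' ∧ reduce (x :: L) = L' := by
  rw [reduce.cons, h]
  cases L with
  | nil => left; rfl
  | cons y L' =>
    by_cases hc : x.1 = y.1 ∧ x.2 = !y.2
    · right
      refine ⟨L', ?_, ?_⟩
      · have : y = (x.1, !x.2) := by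
          obtain ⟨h1, h2⟩ := hc
          cases y with
          | mk y1 y2 => simp only [Prod.mk.injEq] at *
                        exact ⟨h1.symm, by rw [h2, Bool.not_not]⟩
        rw [this]
      · simp [hc]
    · left; simp [hc]

theorem reduced_of_reduced_cons {x : α × Bool} {L : List (α × Bool)}
    (h : reduce (x :: L) = x :: L) : reduce L = L := by
  have hle : (reduce L).length ≤ L.length := Red.length_le reduce.red
  rw [reduce.cons] at h
  cases hR : reduce L with
  | nil =>
    rw [hR] at h
    simp only [List.cons.injEq] at h
    rw [← h.2]
  | cons y L' =>
    rw [hR] at h hle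
    by_cases hc : x.1 = y.1 ∧ x.2 = !y.2
    · simp only [hc, if_true, and_self] at h
      have : L'.length = L.length + 1 := by rw [h]; simp
      simp at hle
      omega
    · simp only [hc, if_false] at h
      have : L = y :: L' := by
        have := h
        simp only [List.cons.injEq] at this
        exact this.2.symm
      rw [this, ← hR, this]

theorem reduce_cons_cancel (a : α) (b : Bool) (L : List (α × Bool)) :
    reduce ((a, !b) :: (a, b) :: L) = reduce L :=
  reduce.Step.eq Red.Step.cons_not_rev

theorem reduce_cons_reduce (x : α × Bool) (L : List (α × Bool)) :
    reduce (x :: reduce L) = reduce (x :: L) :=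
  (reduce.eq_of_red (Red.cons_cons reduce.red)).symm

/-- centralizer of a generator -/
theorem eq_zpow_of_commute (a : α) (c : FreeGroup α) (h : c * of a = of a * c) :
    ∃ k : ℤ, c = of a ^ k := by
  generalize hn : c.toWord.length = n
  induction n using Nat.strong_induction_on generalizing c with
  | _ n ih =>
  have hred : reduce c.toWord = c.toWord := reduce_toWord c
  cases hL : c.toWord with
  | nil =>
    refine ⟨0, ?_⟩
    have : c = 1 := toWord_eq_nil_iff.mp hL
    simp [this]
  | cons p L₂ =>
    obtain ⟨s, b⟩ := p
    by_cases hsa : s = a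
    · subst hsa
      -- c = (of s)^(±1) * c₂
      set u : FreeGroup α := if b then of s else (of s)⁻¹ with hu
      have hcu : c = u * (u⁻¹ * c) := by group
      set c₂ : FreeGroup α := u⁻¹ * c with hc₂
      have hu_inv : u⁻¹ = mk [(s, !b)] := by
        cases b <;> simp [hu, of, inv_mk, invRev]
      have hword : c₂.toWord = L₂ := by
        have : c₂ = mk ((s, !b) :: c.toWord) := by
          calc c₂ = mk [(s, !b)] * mk c.toWord := by rw [hc₂, hu_inv, mk_toWord]
          _ = mk ((s, !b) :: c.toWord) := mul_mk
        rw [this, toWord_mk, hL, reduce_cons_cancel]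
        rw [hL] at hred
        exact reduced_of_reduced_cons hred
      have hucomm : u * of s = of s * u := by
        cases b <;> simp [hu] <;> group
      have hcomm₂ : c₂ * of s = of s * c₂ := by
        rw [hc₂]
        have : u⁻¹ * of s = of s * u⁻¹ := by
          cases b <;> simp [hu] <;> group
        calc u⁻¹ * c * of s = u⁻¹ * (of s * c) := by rw [mul_assoc, h]
          _ = of s * (u⁻¹ * c) := by rw [← mul_assoc, this, mul_assoc]
      have hlen : c₂.toWord.length < n := by
        rw [hword, ← hn, hL]; simp
      obtain ⟨k, hk⟩ := ih c₂.toWord.length hlen c₂ hcomm₂ rfl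
      refine ⟨(if b then 1 else -1) + k, ?_⟩
      rw [hcu, hk, zpow_add]
      cases b <;> simp [hu]
    · -- contradiction
      exfalso
      have hred' : reduce c.toWord = c.toWord := hred
      have htw : (c * of a).toWord = (of a * c).toWord := by rw [h]
      -- RHS
      have hrhs : (of a * c).toWord = (a, true) :: c.toWord := by
        have : of a * c = mk ((a, true) :: c.toWord) := by
          calc of a * c = mk [(a, true)] * mk c.toWord := by rw [mk_toWord]; rfl
          _ = mk ((a, true) :: c.toWord) := mul_mk
        rw [this, toWord_mk]
        rcases reduce_cons_of_reduced hred ((a, true)) with h1 | ⟨L', hL', _⟩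
        · exact h1
        · exfalso; rw [hL] at hL'; simp at hL'; exact hsa hL'.1.1
      -- LHS
      have hlhs : (c * of a).toWord = c.toWord ++ [(a, true)] ∨
          ∃ M, (c * of a).toWord = M ∧ M.length + 1 = c.toWord.length := by
        have hmk : c * of a = mk (c.toWord ++ [(a, true)]) := by
          calc c * of a = mk c.toWord * mk [(a, true)] := by rw [mk_toWord]; rfl
          _ = mk (c.toWord ++ [(a, true)]) := mul_mk
        rw [hmk, toWord_mk]
        have hinv : invRev (c.toWord ++ [(a, true)]) = (a, false) :: invRev c.toWord := by
          simp [invRev]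
        have hredinv : reduce (invRev c.toWord) = invRev c.toWord := by
          rw [reduce_invRev, hred]
        have key : reduce (c.toWord ++ [(a, true)]) =
            invRev (reduce ((a, false) :: invRev c.toWord)) := by
          rw [← hinv, ← reduce_invRev, invRev_invRev]
        rcases reduce_cons_of_reduced hredinv ((a, false)) with h1 | ⟨L', hL', h2⟩
        · left
          rw [key, h1, ← hinv, invRev_invRev]
        · right
          refine ⟨invRev L', by rw [key, h2], ?_⟩
          have := congrArg List.length hL'
          simp [invRev_length] at this ⊢
          omega
      rcases hlhs with h1 | ⟨M, h2, h3⟩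
      · rw [htw, hrhs] at h1
        -- (a,true) :: c.toWord = c.toWord ++ [(a,true)], compare heads
        rw [hL] at h1
        have := congrArg List.head? h1
        simp at this
        exact hsa this.1.symm
      · rw [htw, hrhs] at h2
        have := congrArg List.length h2
        simp at this
        omega

section RF

variable (β : Type) [Fintype β] [DecidableEq β] (N : ℕ)

/-- Reduced words of length at most `N`. -/
def RWords : Type := {l : List (β × Bool) // reduce l = l ∧ l.length ≤ N}

instance : DecidableEq (RWords β N) := Subtype.instDecidableEq

noncomputable instance : Fintype (RWords β N) := by
  refine Fintype.ofInjective (fun l : RWords β N => (fun i : Fin (N+1) => l.1[(i : ℕ)]?)) ?_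
  intro a b h
  apply Subtype.ext
  apply List.ext_getElem?
  intro n
  by_cases hn : n < N + 1
  · exact congrFun h ⟨n, hn⟩
  · rw [List.getElem?_eq_none (le_trans a.2.2 (by omega)),
      List.getElem?_eq_none (le_trans b.2.2 (by omega))]

variable {β N}

/-- domain of the partial injection "prepend (t, true) and reduce" -/
def domA (t : β) : Set (RWords β N) := fun v => (reduce ((t, true) :: v.1)).length ≤ N

def domB (t : β) : Set (RWords β N) := fun v => (reduce ((t, false) :: v.1)).length ≤ N

instance (t : β) : DecidablePred (· ∈ domA (N := N) t) := fun _ => Nat.decLe _ _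
instance (t : β) : DecidablePred (· ∈ domB (N := N) t) := fun _ => Nat.decLe _ _

theorem cancel_fb {t : β} {l : List (β × Bool)} (h : reduce l = l) :
    reduce ((t, false) :: reduce ((t, true) :: l)) = l := by
  rw [reduce_cons_reduce]
  have : ((t, false) : β × Bool) = (t, !true) := rfl
  rw [this, reduce_cons_cancel, h]

theorem cancel_bf {t : β} {l : List (β × Bool)} (h : reduce l = l) :
    reduce ((t, true) :: reduce ((t, false) :: l)) = l := by
  rw [reduce_cons_reduce]
  have : ((t, true) : β × Bool) = (t, !false) := rfl
  rw [this, reduce_cons_cancel, h]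

/-- the partial bijection as an equiv between domains -/
def eAB (t : β) : domA (N := N) t ≃ domB (N := N) t where
  toFun v := ⟨⟨reduce ((t, true) :: v.1.1), reduce.idem, v.2⟩, by
    show (reduce ((t, false) :: reduce ((t, true) :: v.1.1))).length ≤ N
    rw [cancel_fb v.1.2.1]; exact v.1.2.2⟩
  invFun w := ⟨⟨reduce ((t, false) :: w.1.1), reduce.idem, w.2⟩, by
    show (reduce ((t, true) :: reduce ((t, false) :: w.1.1))).length ≤ N
    rw [cancel_bf w.1.2.1]; exact w.1.2.2⟩
  left_inv v := by
    apply Subtype.ext; apply Subtype.ext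
    exact cancel_fb v.1.2.1
  right_inv w := by
    apply Subtype.ext; apply Subtype.ext
    exact cancel_bf w.1.2.1

noncomputable def compEquiv (t : β) :
    ((domA (N := N) t)ᶜ : Set (RWords β N)) ≃ ((domB (N := N) t)ᶜ : Set (RWords β N)) := by
  apply Fintype.equivOfCardEq
  rw [Fintype.card_compl_set, Fintype.card_compl_set, Fintype.card_congr (eAB t)]

/-- the permutation extending the partial bijection -/
noncomputable def sigma (t : β) : Equiv.Perm (RWords β N) :=
  (Equiv.Set.sumCompl (domA (N := N) t)).symm.trans
    (((eAB t).sumCongr (compEquiv t)).trans (Equiv.Set.sumCompl (domB (N := N) t)))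

theorem sigma_apply {t : β} {v : RWords β N} (hv : v ∈ domA (N := N) t) :
    sigma t v = ⟨reduce ((t, true) :: v.1), reduce.idem, hv⟩ := by
  unfold sigma
  rw [Equiv.trans_apply, Equiv.trans_apply]
  rw [Equiv.Set.sumCompl_symm_apply_of_mem hv]
  rfl

theorem sigma_symm_apply {t : β} {v : RWords β N} (hv : v ∈ domB (N := N) t) :
    (sigma t).symm v = ⟨reduce ((t, false) :: v.1), reduce.idem, hv⟩ := by
  have : sigma t ⟨reduce ((t, false) :: v.1), reduce.idem, hv⟩ = v := by
    have hmem : (⟨reduce ((t, false) :: v.1), reduce.idem, hv⟩ : RWords β N) ∈ domA (N := N) t := by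
      show (reduce ((t, true) :: reduce ((t, false) :: v.1))).length ≤ N
      rw [cancel_bf v.2.1]; exact v.2.2
    rw [sigma_apply hmem]
    apply Subtype.ext
    show reduce ((t, true) :: reduce ((t, false) :: v.1)) = v.1
    exact cancel_bf v.2.1
  apply (Equiv.symm_apply_eq _).mpr
  exact this.symm

noncomputable def rfHom : FreeGroup β →* Equiv.Perm (RWords β N) :=
  FreeGroup.lift (fun t => sigma (N := N) t)

/-- empty word -/
def emptyW : RWords β N := ⟨[], rfl, by simp⟩

theorem rfHom_mk_apply : ∀ (L : List (β × Bool)) (h : reduce L = L) (hl : L.length ≤ N),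
    (rfHom (N := N) (mk L)) emptyW = ⟨L, h, hl⟩ := by
  intro L
  induction L with
  | nil =>
    intro h hl
    show (rfHom (N := N) (mk [])) emptyW = emptyW
    have : (mk [] : FreeGroup β) = 1 := rfl
    rw [this, _root_.map_one, Equiv.Perm.one_apply]
  | cons x L ih =>
    intro h hl
    obtain ⟨t, b⟩ := x
    have hred : reduce L = L := reduced_of_reduced_cons h
    have hlen : L.length ≤ N := by simp at hl; omega
    have hmul : (mk ((t, b) :: L) : FreeGroup β) = mk [(t, b)] * mk L := (mul_mk (L₁ := [(t, b)]) (L₂ := L)).symm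
    rw [hmul, _root_.map_mul, Equiv.Perm.mul_apply, ih hred hlen]
    cases b with
    | true =>
      have hof : (mk [(t, true)] : FreeGroup β) = of t := rfl
      rw [hof]
      have : rfHom (N := N) (of t) = sigma t := FreeGroup.lift_apply_of
      rw [this]
      have hmem : (⟨L, hred, hlen⟩ : RWords β N) ∈ domA (N := N) t := by
        show (reduce ((t, true) :: L)).length ≤ N
        rw [h]; exact hl
      rw [sigma_apply hmem]
      apply Subtype.ext
      exact h
    | false =>
      have hof : (mk [(t, false)] : FreeGroup β) = (of t)⁻¹ := by
        rw [show (of t : FreeGroup β) = mk [(t, true)] from rfl, inv_mk]; rfl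
      rw [hof, _root_.map_inv]
      have : rfHom (N := N) (of t) = sigma t := FreeGroup.lift_apply_of
      rw [this]
      have hmem : (⟨L, hred, hlen⟩ : RWords β N) ∈ domB (N := N) t := by
        show (reduce ((t, false) :: L)).length ≤ N
        rw [h]; exact hl
      rw [show ((sigma t)⁻¹ : Equiv.Perm (RWords β N)) = (sigma t).symm from rfl,
        sigma_symm_apply hmem]
      apply Subtype.ext
      exact h

/-- Residual finiteness into symmetric groups, finite alphabet case. -/
theorem exists_perm_hom_fin (g : FreeGroup β) (hg : g ≠ 1) :
    ∃ (n : ℕ) (f : FreeGroup β →* Equiv.Perm (Fin n)), f g ≠ 1 := by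
  set N := g.toWord.length with hN
  have h1 : (rfHom (N := N) g) emptyW = ⟨g.toWord, reduce_toWord g, le_refl _⟩ := by
    conv_lhs => rw [← mk_toWord (x := g)]
    exact rfHom_mk_apply g.toWord (reduce_toWord g) (le_refl _)
  have h2 : rfHom (N := N) g ≠ 1 := by
    intro hone
    rw [hone, Equiv.Perm.one_apply] at h1
    have : ([] : List (β × Bool)) = g.toWord := congrArg Subtype.val h1
    exact hg (toWord_eq_nil_iff.mp this.symm)
  set X := RWords β N
  let eqv : X ≃ Fin (Fintype.card X) := Fintype.equivFin X
  refine ⟨Fintype.card X, ?_, ?_⟩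
  · refine MonoidHom.comp ?_ (rfHom (N := N))
    exact { toFun := fun p => (eqv.symm.trans (p.trans eqv)),
            map_one' := by ext i; simp,
            map_mul' := by intro p q; ext i; simp }
  · intro hone
    apply h2
    ext v
    have := congrFun (congrArg (fun (p : Equiv.Perm (Fin (Fintype.card X))) => (p : Fin _ → Fin _)) hone) (eqv v)
    simp at this
    simpa using this

end RF
/-- Residual finiteness into symmetric groups, general alphabet. -/
theorem exists_perm_hom (S : Type) (g : FreeGroup S) (hg : g ≠ 1) :
    ∃ (n : ℕ) (f : FreeGroup S →* Equiv.Perm (Fin n)), f g ≠ 1 := by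
  classical
  set T : Finset S := (g.toWord.map Prod.fst).toFinset with hT
  set L' : List (↥T × Bool) := g.toWord.attach.map
    (fun x => (⟨x.1.1, by
      rw [hT, List.mem_toFinset]
      exact List.mem_map_of_mem x.2⟩, x.1.2)) with hL'
  set g' : FreeGroup ↥T := mk L' with hg'
  have hmap : FreeGroup.map (Subtype.val : ↥T → S) g' = g := by
    rw [hg', map.mk, hL', List.map_map]
    conv_rhs => rw [← mk_toWord (x := g)]
    congr 1
    exact (List.map_congr_left fun x _ => rfl).trans (List.attach_map_subtype_val _)
  have hg'1 : g' ≠ 1 := by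
    intro h1
    apply hg
    rw [← hmap, h1, _root_.map_one]
  obtain ⟨n, f', hf'⟩ := exists_perm_hom_fin g' hg'1
  set ρ : FreeGroup S →* FreeGroup ↥T :=
    FreeGroup.lift (fun s => if h : s ∈ T then FreeGroup.of (⟨s, h⟩ : ↥T) else 1) with hρ
  have hretr : ρ (FreeGroup.map (Subtype.val : ↥T → S) g') = g' := by
    have : (ρ.comp (FreeGroup.map (Subtype.val : ↥T → S))) = MonoidHom.id _ := by
      apply FreeGroup.ext_hom
      intro a
      simp only [MonoidHom.comp_apply, MonoidHom.id_apply, map.of, hρ, lift_apply_of]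
      rw [dif_pos a.2]
    exact DFunLike.congr_fun this g'
  refine ⟨n, f'.comp ρ, ?_⟩
  have : ρ g = g' := by rw [← hmap, hretr]
  simpa [this] using hf'

end FreeQuandleAux

theorem FreeQuandleAux.eqvGen_zpow {S : Type u} (a : S) (w : FreeGroup S) (k : ℤ) :
    Relation.EqvGen FreeRack.rel (a, w) (a, w * FreeGroup.of a ^ k) := by
  induction k using Int.induction_on with
  | zero => rw [zpow_zero, mul_one]; exact Relation.EqvGen.refl _
  | succ i ih =>
    refine Relation.EqvGen.trans _ _ _ ih (Relation.EqvGen.rel _ _ ?_)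
    show (a, w * FreeGroup.of a ^ ((i : ℤ) + 1)) = (a, w * FreeGroup.of a ^ (i : ℤ) * FreeGroup.of a)
    refine Prod.ext rfl ?_
    show w * FreeGroup.of a ^ ((i : ℤ) + 1) = w * FreeGroup.of a ^ (i : ℤ) * FreeGroup.of a
    rw [zpow_add_one, mul_assoc]
  | pred i ih =>
    refine Relation.EqvGen.trans _ _ _ ih (Relation.EqvGen.symm _ _ (Relation.EqvGen.rel _ _ ?_))
    show (a, w * FreeGroup.of a ^ (-(i : ℤ))) = (a, w * FreeGroup.of a ^ (-(i : ℤ) - 1) * FreeGroup.of a)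
    refine Prod.ext rfl ?_
    show w * FreeGroup.of a ^ (-(i : ℤ)) = w * FreeGroup.of a ^ (-(i : ℤ) - 1) * FreeGroup.of a
    group

/-- Any two distinct elements of a free quandle can be separated by a quandle
homomorphism into the conjugation quandle of some symmetric group. -/
theorem freeQuandle_separated_by_symmetric_group (S : Type)
    (x y : FreeQuandle S) (hxy : x ≠ y) :
    ∃ (n : ℕ) (φ : FreeQuandle S →◃ Quandle.Conj (Equiv.Perm (Fin n))),
      φ x ≠ φ y := by
  classical
  induction x using Quotient.inductionOn with | _ p => ?_
  induction y using Quotient.inductionOn with | _ q => ?_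
  obtain ⟨a, w⟩ := p
  obtain ⟨b, u⟩ := q
  have main : ∃ (n : ℕ) (f : FreeGroup S →* Equiv.Perm (Fin n)),
      f (FreeRack.toGroup (a, w)) ≠ f (FreeRack.toGroup (b, u)) := by
    by_cases hab : a = b
    · subst hab
      have hc : w⁻¹ * u ∉ Subgroup.zpowers (FreeGroup.of a) := by
        intro hmem
        obtain ⟨k, hk⟩ := Subgroup.mem_zpowers_iff.mp hmem
        apply hxy
        apply Quotient.sound
        have hu : u = w * FreeGroup.of a ^ k := by rw [hk]; group
        rw [hu]
        exact FreeQuandleAux.eqvGen_zpow a w k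
      have hne : FreeRack.toGroup (a, w) ≠ FreeRack.toGroup (a, u) := by
        intro he
        apply hc
        simp only [FreeRack.toGroup] at he
        have hcomm : (w⁻¹ * u) * FreeGroup.of a = FreeGroup.of a * (w⁻¹ * u) := by
          calc (w⁻¹ * u) * FreeGroup.of a = w⁻¹ * (u * FreeGroup.of a * u⁻¹) * u := by group
          _ = w⁻¹ * (w * FreeGroup.of a * w⁻¹) * u := by rw [he]
          _ = FreeGroup.of a * (w⁻¹ * u) := by group
        obtain ⟨k, hk⟩ := FreeQuandleAux.eq_zpow_of_commute a _ hcomm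
        exact Subgroup.mem_zpowers_iff.mpr ⟨k, hk.symm⟩
      obtain ⟨n, f, hf⟩ := FreeQuandleAux.exists_perm_hom S
        (FreeRack.toGroup (a, w) * (FreeRack.toGroup (a, u))⁻¹)
        (fun h1 => hne (by rwa [mul_inv_eq_one] at h1))
      refine ⟨n, f, fun he => hf ?_⟩
      rw [map_mul, map_inv, he, mul_inv_cancel]
    · set e : Equiv.Perm (Fin 2) := Equiv.swap 0 1 with hedef
      set f : FreeGroup S →* Equiv.Perm (Fin 2) :=
        FreeGroup.lift (fun s => if s = a then e else 1) with hf
      refine ⟨2, f, ?_⟩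
      have h1 : f (FreeRack.toGroup (a, w)) = f w * e * (f w)⁻¹ := by
        have hx : (if a = a then e else 1) = e := if_pos rfl
        simp only [FreeRack.toGroup, map_mul, map_inv, hf, FreeGroup.lift_apply_of, hx]
        simp
      have h2 : f (FreeRack.toGroup (b, u)) = 1 := by
        have hx : (if b = a then e else 1) = 1 := if_neg (fun h : b = a => hab h.symm)
        simp only [FreeRack.toGroup, map_mul, map_inv, hf, FreeGroup.lift_apply_of, hx]
        group
      rw [h1, h2]
      intro hcon
      have : e = 1 := by
        have h3 : e = (f w)⁻¹ * (f w * e * (f w)⁻¹) * f w := by group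
        rw [hcon] at h3
        rw [h3]; group
      rw [hedef, Equiv.swap_eq_one_iff] at this
      exact absurd this (by decide)
  obtain ⟨n, f, hf⟩ := main
  refine ⟨n, ⟨fun z => f (FreeQuandle.toConj z), ?_⟩, hf⟩
  intro z₁ z₂
  induction z₁ using Quotient.inductionOn with | _ p => ?_
  induction z₂ using Quotient.inductionOn with | _ q => ?_
  show f (FreeQuandle.toConj (Shelf.act (Quotient.mk _ p) (Quotient.mk _ q))) = _
  have hact : (Shelf.act (Quotient.mk _ p) (Quotient.mk _ q) : FreeQuandle S)
      = Quotient.mk _ (Shelf.act p q) := rfl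
  rw [hact]
  show f (FreeRack.toGroup (Shelf.act p q)) =
    Shelf.act (f (FreeRack.toGroup p)) (f (FreeRack.toGroup q))
  rw [Quandle.conj_act_eq_conj]
  have : FreeRack.toGroup (Shelf.act p q)
      = FreeRack.toGroup p * FreeRack.toGroup q * (FreeRack.toGroup p)⁻¹ := by
    show (FreeRack.toGroup p * q.2) * FreeGroup.of q.1 * (FreeRack.toGroup p * q.2)⁻¹ = _
    simp only [FreeRack.toGroup]
    group
  rw [this, map_mul, map_mul, map_inv]
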